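/- arXiv:2405.13180 — 7 statements merged into one kernel-verified Lean document; each statement's English description precedes it below -/
import Mathlib

section
/- Suppose that for every x ∈ ℝ^{d_x} the operator norm bound ‖(I − K H) ∘ DF(x)‖ ≤ λ holds for some constant λ ∈ (0,1), and that ‖(I − K H)(F_s(x) − F(x))‖ ≤ ε for every x ∈ ℝ^{d_x}. Let the true signal satisfy x_t^true = F(x_{t−1}^true) and the observations y_t = H x_t^true + γ η_t for t ≥ 1, where the η_t are i.i.d. random vectors in ℝ^{d_y} with E‖η_t‖ ≤ A for some constant A > 0. Let the surrogate 3DVar filter satisfy x_t^s = (I − K H) F_s(x_{t−1}^s) + K y_t for t ≥ 1. Then there exists a constant c > 0, independent of γ, λ and ε (depending only on ‖K‖ and A), such that limsup_{t→∞} E‖x_t^s − x_t^true‖ ≤ c (γ + ε)/(1 − λ). -/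
open MeasureTheory Filter ProbabilityTheory

/-- Euclidean state space of dimension `d`. -/
abbrev Ex (d : ℕ) := EuclideanSpace ℝ (Fin d)

/-- Long-time accuracy of the surrogate 3DVar filter: there is a constant `c > 0`,
independent of `γ`, `lam` and `ε` (it depends only on `‖K‖` and `A`), such that for
any true dynamics `F`, surrogate dynamics `Fs`, contraction constant `lam ∈ (0,1)`
with `‖(I - K H) ∘ DF(x)‖ ≤ lam`, surrogate-error bound
`‖(I - K H)(Fs x - F x)‖ ≤ ε`, noise level `γ ≥ 0`, i.i.d. noises with `E‖η_t‖ ≤ A`,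
signal `x_t^true = F(x_{t-1}^true)`, observations `y_t = H x_t^true + γ η_t`, and
surrogate filter `x_t^s = (I - K H) Fs(x_{t-1}^s) + K y_t`, one has
`limsup_{t→∞} E‖x_t^s - x_t^true‖ ≤ c (γ + ε)/(1 - lam)`. -/
theorem stmt_0 {dx dy : ℕ} (hdx : 0 < dx) (hdy : 0 < dy)
    {Ω : Type} [MeasurableSpace Ω] (μ : Measure Ω) [IsProbabilityMeasure μ]
    (H : Ex dx →L[ℝ] Ex dy) (K : Ex dy →L[ℝ] Ex dx)
    (A : ℝ) (hA : 0 < A) :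
    ∃ c > 0,
      ∀ (F Fs : Ex dx → Ex dx), ContDiff ℝ 1 F →
      ∀ lam : ℝ, lam ∈ Set.Ioo (0 : ℝ) 1 →
      (∀ x : Ex dx,
        ‖(ContinuousLinearMap.id ℝ (Ex dx) - K.comp H).comp (fderiv ℝ F x)‖ ≤ lam) →
      ∀ ε : ℝ,
      (∀ x : Ex dx,
        ‖(ContinuousLinearMap.id ℝ (Ex dx) - K.comp H) (Fs x - F x)‖ ≤ ε) →
      ∀ γ : ℝ, 0 ≤ γ →
      ∀ η : ℕ → Ω → Ex dy,
        (∀ t : ℕ, Measurable (η t)) →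
        iIndepFun η μ →
        (∀ s t : ℕ, IdentDistrib (η s) (η t) μ μ) →
        (∀ t : ℕ, Integrable (fun ω => ‖η t ω‖) μ) →
        (∀ t : ℕ, ∫ ω, ‖η t ω‖ ∂μ ≤ A) →
      ∀ (xtrue : ℕ → Ex dx) (y : ℕ → Ω → Ex dy) (xs : ℕ → Ω → Ex dx),
        (∀ t : ℕ, xtrue (t + 1) = F (xtrue t)) →
        (∀ (t : ℕ) (ω : Ω), y (t + 1) ω = H (xtrue (t + 1)) + γ • η (t + 1) ω) →
        (∀ (t : ℕ) (ω : Ω), xs (t + 1) ω =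
          (ContinuousLinearMap.id ℝ (Ex dx) - K.comp H) (Fs (xs t ω)) + K (y (t + 1) ω)) →
        (∀ t : ℕ, Integrable (fun ω => ‖xs t ω - xtrue t‖) μ) →
        limsup (fun t => ∫ ω, ‖xs t ω - xtrue t‖ ∂μ) atTop ≤ c * (γ + ε) / (1 - lam) := by
  refine ⟨‖K‖ * A + 1, by positivity, ?_⟩
  intro F Fs hF lam hlam hcontr ε hsur γ hγ η hηm hind hid hηint hηA xtrue y xs hxt hy hxs hint
  obtain ⟨hlam0, hlam1⟩ := hlam
  set L : Ex dx →L[ℝ] Ex dx := ContinuousLinearMap.id ℝ (Ex dx) - K.comp H with hLdef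
  have hε : 0 ≤ ε := le_trans (norm_nonneg _) (hsur 0)
  -- Lipschitz property of L ∘ F
  have hlip : ∀ a b : Ex dx, ‖L (F a) - L (F b)‖ ≤ lam * ‖a - b‖ := by
    intro a b
    have hdiff : ∀ x ∈ (Set.univ : Set (Ex dx)), DifferentiableAt ℝ (fun z => L (F z)) x :=
      fun x _ => L.differentiableAt.comp x (hF.differentiable one_ne_zero x)
    have hbd : ∀ x ∈ (Set.univ : Set (Ex dx)), ‖fderiv ℝ (fun z => L (F z)) x‖ ≤ lam := by
      intro x _
      have h1 : fderiv ℝ (fun z => L (F z)) x = L.comp (fderiv ℝ F x) := by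
        have := fderiv_comp (𝕜 := ℝ) x (L.differentiableAt (x := F x))
          (hF.differentiable one_ne_zero x)
        rw [ContinuousLinearMap.fderiv] at this; exact this
      rw [h1]; exact hcontr x
    have := convex_univ.norm_image_sub_le_of_norm_fderiv_le hdiff hbd
      (Set.mem_univ b) (Set.mem_univ a)
    simpa using this
  -- set up error sequence
  set a : ℕ → ℝ := fun t => ∫ ω, ‖xs t ω - xtrue t‖ ∂μ with hadef
  have ha0 : ∀ t, 0 ≤ a t := fun t => integral_nonneg fun ω => norm_nonneg _
  set b : ℝ := ε + γ * ‖K‖ * A with hbdef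
  have hb0 : 0 ≤ b := by positivity
  -- one-step bound
  have hstep : ∀ t, a (t + 1) ≤ lam * a t + b := by
    intro t
    have hptw : ∀ ω, ‖xs (t+1) ω - xtrue (t+1)‖ ≤
        lam * ‖xs t ω - xtrue t‖ + ε + γ * ‖K‖ * ‖η (t+1) ω‖ := by
      intro ω
      have hdecomp : xs (t+1) ω - xtrue (t+1) =
          (L (Fs (xs t ω)) - L (F (xs t ω))) + (L (F (xs t ω)) - L (F (xtrue t)))
            + γ • K (η (t+1) ω) := by
        rw [hxs t ω, hy t ω, hxt t]
        simp only [hLdef, ContinuousLinearMap.sub_apply, ContinuousLinearMap.coe_id',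
          id_eq, ContinuousLinearMap.comp_apply, map_add, ContinuousLinearMap.map_smul]
        abel
      calc ‖xs (t+1) ω - xtrue (t+1)‖
          ≤ ‖L (Fs (xs t ω)) - L (F (xs t ω))‖ + ‖L (F (xs t ω)) - L (F (xtrue t))‖
            + ‖γ • K (η (t+1) ω)‖ := by
            rw [hdecomp]; exact norm_add₃_le
        _ ≤ ε + lam * ‖xs t ω - xtrue t‖ + γ * (‖K‖ * ‖η (t+1) ω‖) := by
            gcongr
            · simpa [map_sub] using hsur (xs t ω)
            · exact hlip _ _
            · rw [norm_smul, Real.norm_of_nonneg hγ]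
              gcongr
              exact K.le_opNorm _
        _ = lam * ‖xs t ω - xtrue t‖ + ε + γ * ‖K‖ * ‖η (t+1) ω‖ := by ring
    have hRint : Integrable
        (fun ω => lam * ‖xs t ω - xtrue t‖ + ε + γ * ‖K‖ * ‖η (t+1) ω‖) μ :=
      (((hint t).const_mul lam).add (integrable_const ε)).add ((hηint (t+1)).const_mul _)
    have hmono := integral_mono (hint (t+1)) hRint hptw
    have hR : ∫ ω, (lam * ‖xs t ω - xtrue t‖ + ε + γ * ‖K‖ * ‖η (t+1) ω‖) ∂μ
        = lam * a t + ε + γ * ‖K‖ * ∫ ω, ‖η (t+1) ω‖ ∂μ := by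
      have e1 : ∫ ω, (lam * ‖xs t ω - xtrue t‖ + ε + γ * ‖K‖ * ‖η (t+1) ω‖) ∂μ
          = (∫ ω, (lam * ‖xs t ω - xtrue t‖ + ε) ∂μ)
            + ∫ ω, γ * ‖K‖ * ‖η (t+1) ω‖ ∂μ :=
        integral_add (((hint t).const_mul lam).add (integrable_const ε))
          ((hηint (t+1)).const_mul _)
      have e2 : ∫ ω, (lam * ‖xs t ω - xtrue t‖ + ε) ∂μ
          = (∫ ω, lam * ‖xs t ω - xtrue t‖ ∂μ) + ∫ _ω, ε ∂μ :=
        integral_add ((hint t).const_mul lam) (integrable_const ε)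
      rw [e1, e2, integral_const_mul, integral_const_mul, integral_const]
      simp [hadef]
    rw [hR] at hmono
    calc a (t+1) ≤ lam * a t + ε + γ * ‖K‖ * ∫ ω, ‖η (t+1) ω‖ ∂μ := hmono
      _ ≤ lam * a t + ε + γ * ‖K‖ * A := by gcongr; exact hηA (t+1)
      _ = lam * a t + b := by rw [hbdef]; ring
  -- explicit bound by induction
  have hbound : ∀ t, a t ≤ lam ^ t * a 0 + b / (1 - lam) := by
    intro t
    induction t with
    | zero =>
      have : 0 ≤ b / (1 - lam) := div_nonneg hb0 (by linarith)
      simpa using by linarith [ha0 0]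
    | succ t ih =>
      calc a (t+1) ≤ lam * a t + b := hstep t
        _ ≤ lam * (lam ^ t * a 0 + b / (1 - lam)) + b := by gcongr
        _ = lam ^ (t+1) * a 0 + (lam * (b / (1-lam)) + b) := by ring
        _ = lam ^ (t+1) * a 0 + b / (1 - lam) := by
            have h1l : (1 : ℝ) - lam ≠ 0 := by linarith
            congr 1
            field_simp
            ring
  -- limsup bound
  have htend : Tendsto (fun t => lam ^ t * a 0 + b / (1 - lam)) atTop
      (nhds (b / (1 - lam))) := by
    have : Tendsto (fun t : ℕ => lam ^ t * a 0) atTop (nhds 0) := by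
      simpa using (tendsto_pow_atTop_nhds_zero_of_lt_one hlam0.le hlam1).mul_const (a 0)
    simpa using this.add tendsto_const_nhds
  have hls : limsup a atTop ≤ b / (1 - lam) := by
    have h1 : limsup a atTop ≤ limsup (fun t => lam ^ t * a 0 + b / (1 - lam)) atTop :=
      limsup_le_limsup (Eventually.of_forall hbound)
        (isCoboundedUnder_le_of_le atTop ha0)
        htend.isBoundedUnder_le
    rw [htend.limsup_eq] at h1
    exact h1
  refine hls.trans ?_
  rw [div_le_div_iff_of_pos_right (by linarith)]
  have : b ≤ (‖K‖ * A + 1) * (γ + ε) := by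
    rw [hbdef]
    nlinarith [mul_nonneg (mul_nonneg (norm_nonneg K) hA.le) hε, hγ]
  linarith
end

section
/- Suppose that for every x ∈ ℝ^{d_x} the operator norm bound ‖(I − K H) ∘ DF(x)‖ ≤ λ holds for some constant λ ∈ (0,1). Let the true signal satisfy x_t^true = F(x_{t−1}^true) and the observations y_t = H x_t^true + γ η_t for t ≥ 1, where the η_t are i.i.d. random vectors in ℝ^{d_y} with E‖η_t‖ ≤ A for some constant A > 0. Let the operational 3DVar filter, which uses the true dynamics, satisfy x_t^o = (I − K H) F(x_{t−1}^o) + K y_t for t ≥ 1. Then there exists a constant c > 0 depending only on ‖K‖ and A such that limsup_{t→∞} E‖x_t^o − x_t^true‖ ≤ c γ/(1 − λ). -/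
open MeasureTheory Filter ProbabilityTheory

/-- Long-time accuracy of the operational 3DVar filter (the one using the true
dynamics `F`): there is a constant `c > 0`, depending only on `‖K‖` and `A`, such
that for any true dynamics, contraction constant `lam ∈ (0,1)`, noise level `γ ≥ 0`,
i.i.d. noises with `E‖η_t‖ ≤ A`, signal, observations, and filter as in the 3DVar
setting, `limsup_{t→∞} E‖x_t^o - x_t^true‖ ≤ c γ / (1 - lam)`. -/
theorem stmt_1 {dx dy : ℕ} (hdx : 0 < dx) (hdy : 0 < dy)
    {Ω : Type} [MeasurableSpace Ω] (μ : Measure Ω) [IsProbabilityMeasure μ]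
    (H : Ex dx →L[ℝ] Ex dy) (K : Ex dy →L[ℝ] Ex dx)
    (A : ℝ) (hA : 0 < A) :
    ∃ c > 0,
      ∀ (F : Ex dx → Ex dx), ContDiff ℝ 1 F →
      ∀ lam : ℝ, lam ∈ Set.Ioo (0 : ℝ) 1 →
      (∀ x : Ex dx,
        ‖(ContinuousLinearMap.id ℝ (Ex dx) - K.comp H).comp (fderiv ℝ F x)‖ ≤ lam) →
      ∀ γ : ℝ, 0 ≤ γ →
      ∀ η : ℕ → Ω → Ex dy,
        (∀ t : ℕ, Measurable (η t)) →
        iIndepFun η μ →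
        (∀ s t : ℕ, IdentDistrib (η s) (η t) μ μ) →
        (∀ t : ℕ, Integrable (fun ω => ‖η t ω‖) μ) →
        (∀ t : ℕ, ∫ ω, ‖η t ω‖ ∂μ ≤ A) →
      ∀ (xtrue : ℕ → Ex dx) (y : ℕ → Ω → Ex dy) (xo : ℕ → Ω → Ex dx),
        (∀ t : ℕ, xtrue (t + 1) = F (xtrue t)) →
        (∀ (t : ℕ) (ω : Ω), y (t + 1) ω = H (xtrue (t + 1)) + γ • η (t + 1) ω) →
        (∀ (t : ℕ) (ω : Ω), xo (t + 1) ω =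
          (ContinuousLinearMap.id ℝ (Ex dx) - K.comp H) (F (xo t ω)) + K (y (t + 1) ω)) →
        (∀ t : ℕ, Integrable (fun ω => ‖xo t ω - xtrue t‖) μ) →
        limsup (fun t => ∫ ω, ‖xo t ω - xtrue t‖ ∂μ) atTop ≤ c * γ / (1 - lam) := by

  refine ⟨‖K‖ * A + 1, by positivity, ?_⟩
  intro F hF lam hlam hcontr γ hγ η hηmeas hηindep hηid hηint hηA xtrue y xo hxt hy hxo hint
  obtain ⟨hlam0, hlam1⟩ := hlam
  set L : Ex dx →L[ℝ] Ex dx := ContinuousLinearMap.id ℝ (Ex dx) - K.comp H with hL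
  have hFd : Differentiable ℝ F := hF.differentiable one_ne_zero
  -- Lipschitz bound for L ∘ F
  have hlip : ∀ a b : Ex dx, ‖L (F a) - L (F b)‖ ≤ lam * ‖a - b‖ := by
    intro a b
    have hderiv : ∀ x : Ex dx, HasFDerivAt (fun z => L (F z)) (L.comp (fderiv ℝ F x)) x :=
      fun x => L.hasFDerivAt.comp x (hFd x).hasFDerivAt
    have := Convex.norm_image_sub_le_of_norm_fderiv_le
      (f := fun z => L (F z)) (s := (Set.univ : Set (Ex dx))) (C := lam)
      (fun x _ => (hderiv x).differentiableAt)
      (fun x _ => by rw [(hderiv x).fderiv]; exact hcontr x)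
      convex_univ (Set.mem_univ b) (Set.mem_univ a)
    simpa using this
  set a : ℕ → ℝ := fun t => ∫ ω, ‖xo t ω - xtrue t‖ ∂μ with ha
  set B : ℝ := γ * ‖K‖ * A with hB
  have hBnn : 0 ≤ B := by positivity
  have hnn : ∀ t, 0 ≤ a t := fun t => integral_nonneg (fun ω => norm_nonneg _)
  have step : ∀ t, a (t + 1) ≤ lam * a t + B := by
    intro t
    have hpt : ∀ ω, ‖xo (t+1) ω - xtrue (t+1)‖ ≤
        lam * ‖xo t ω - xtrue t‖ + γ * ‖K‖ * ‖η (t+1) ω‖ := by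
      intro ω
      have key : xo (t+1) ω - xtrue (t+1) =
          (L (F (xo t ω)) - L (F (xtrue t))) + γ • K (η (t+1) ω) := by
        rw [hxo, hy, hxt]
        simp only [hL, map_add, _root_.map_smul, ContinuousLinearMap.sub_apply,
          ContinuousLinearMap.coe_comp', Function.comp_apply,
          ContinuousLinearMap.id_apply]
        abel
      calc ‖xo (t+1) ω - xtrue (t+1)‖
          ≤ ‖L (F (xo t ω)) - L (F (xtrue t))‖ + ‖γ • K (η (t+1) ω)‖ := by
            rw [key]; exact norm_add_le _ _
        _ ≤ lam * ‖xo t ω - xtrue t‖ + γ * ‖K‖ * ‖η (t+1) ω‖ := by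
            gcongr
            · exact hlip _ _
            · rw [norm_smul, Real.norm_eq_abs, abs_of_nonneg hγ, mul_assoc]
              gcongr
              exact K.le_opNorm _
    have hint2 : Integrable (fun ω =>
        lam * ‖xo t ω - xtrue t‖ + γ * ‖K‖ * ‖η (t+1) ω‖) μ :=
      ((hint t).const_mul lam).add ((hηint (t+1)).const_mul (γ * ‖K‖))
    calc a (t+1) ≤ ∫ ω, (lam * ‖xo t ω - xtrue t‖ + γ * ‖K‖ * ‖η (t+1) ω‖) ∂μ :=
          integral_mono (hint (t+1)) hint2 hpt
      _ = lam * a t + γ * ‖K‖ * ∫ ω, ‖η (t+1) ω‖ ∂μ := by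
          rw [integral_add ((hint t).const_mul lam) ((hηint (t+1)).const_mul (γ * ‖K‖)),
            integral_const_mul, integral_const_mul]
      _ ≤ lam * a t + B := by
          rw [hB]
          exact add_le_add_right (mul_le_mul_of_nonneg_left (hηA (t+1)) (by positivity)) _
  have hsub : 0 < 1 - lam := by linarith
  have bound : ∀ t, a t ≤ lam ^ t * a 0 + B / (1 - lam) := by
    intro t
    induction t with
    | zero => simp; positivity
    | succ n ih =>
        calc a (n+1) ≤ lam * a n + B := step n
          _ ≤ lam * (lam ^ n * a 0 + B / (1 - lam)) + B := by
              gcongr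
          _ = lam ^ (n+1) * a 0 + (lam * (B / (1 - lam)) + B) := by ring
          _ = lam ^ (n+1) * a 0 + B / (1 - lam) := by
              field_simp
              ring
  -- limsup bound
  have htend : Tendsto (fun t => lam ^ t * a 0 + B / (1 - lam)) atTop
      (nhds (0 * a 0 + B / (1 - lam))) := by
    exact Tendsto.add (Tendsto.mul_const _
      (tendsto_pow_atTop_nhds_zero_of_lt_one (le_of_lt hlam0) hlam1)) tendsto_const_nhds
  have hlimsup : limsup a atTop ≤ B / (1 - lam) := by
    have h1 : limsup a atTop ≤ limsup (fun t => lam ^ t * a 0 + B / (1 - lam)) atTop :=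
      limsup_le_limsup (Eventually.of_forall bound)
        (isCoboundedUnder_le_of_eventually_le atTop (Eventually.of_forall hnn))
        htend.isBoundedUnder_le
    have h2 : limsup (fun t => lam ^ t * a 0 + B / (1 - lam)) atTop
        = 0 * a 0 + B / (1 - lam) := htend.limsup_eq
    rw [h2] at h1
    simpa using h1
  refine hlimsup.trans ?_
  rw [div_le_div_iff₀ hsub hsub]
  have : B ≤ (‖K‖ * A + 1) * γ := by
    rw [hB]
    nlinarith [norm_nonneg K, hA.le, hγ]
  nlinarith [hsub.le]
end

section
/- Suppose that for every x ∈ ℝ^{d_x} the operator norm bound ‖(I − K H) ∘ DF(x)‖ ≤ λ holds for some constant λ ∈ (0,1), and that ‖(I − K H)(F_s(x) − F(x))‖ ≤ ε for every x ∈ ℝ^{d_x}. Fix any sequence of observation vectors y_t ∈ ℝ^{d_y}, and define the surrogate filter x_t^s = (I − K H) F_s(x_{t−1}^s) + K y_t and the operational filter x_t^o = (I − K H) F(x_{t−1}^o) + K y_t for t ≥ 1, initialized with x_0^s = x_0^o. Then for all t ≥ 0, ‖x_t^s − x_t^o‖ ≤ ε (1 − λ^t)/(1 − λ); in particular ‖x_t^s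 − x_t^o‖ ≤ ε/(1 − λ) for all t. -/
open Filter

/-- Distance between the surrogate 3DVar filter and the operational 3DVar filter,
driven by the same observations and started at the same point:
`‖x_t^s - x_t^o‖ ≤ ε (1 - lam^t)/(1 - lam)`, and in particular
`‖x_t^s - x_t^o‖ ≤ ε/(1 - lam)`, for all `t ≥ 0`. -/
theorem stmt_2 {dx dy : ℕ} (hdx : 0 < dx) (hdy : 0 < dy)
    (F Fs : Ex dx → Ex dx) (hF : ContDiff ℝ 1 F)
    (H : Ex dx →L[ℝ] Ex dy) (K : Ex dy →L[ℝ] Ex dx)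
    (lam : ℝ) (hlam : lam ∈ Set.Ioo (0 : ℝ) 1)
    (hderiv : ∀ x : Ex dx,
      ‖(ContinuousLinearMap.id ℝ (Ex dx) - K.comp H).comp (fderiv ℝ F x)‖ ≤ lam)
    (ε : ℝ)
    (hsur : ∀ x : Ex dx,
      ‖(ContinuousLinearMap.id ℝ (Ex dx) - K.comp H) (Fs x - F x)‖ ≤ ε)
    (y : ℕ → Ex dy) (xs xo : ℕ → Ex dx)
    (h0 : xs 0 = xo 0)
    (hxs : ∀ t : ℕ, xs (t + 1) =
      (ContinuousLinearMap.id ℝ (Ex dx) - K.comp H) (Fs (xs t)) + K (y (t + 1)))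
    (hxo : ∀ t : ℕ, xo (t + 1) =
      (ContinuousLinearMap.id ℝ (Ex dx) - K.comp H) (F (xo t)) + K (y (t + 1))) :
    (∀ t : ℕ, ‖xs t - xo t‖ ≤ ε * (1 - lam ^ t) / (1 - lam)) ∧
      (∀ t : ℕ, ‖xs t - xo t‖ ≤ ε / (1 - lam)) := by
  obtain ⟨hl0, hl1⟩ := hlam
  set L := ContinuousLinearMap.id ℝ (Ex dx) - K.comp H with hL
  have hε : 0 ≤ ε := le_trans (norm_nonneg _) (hsur 0)
  have hden : 0 < 1 - lam := by linarith
  have key : ∀ a b : Ex dx, ‖L (F a) - L (F b)‖ ≤ lam * ‖a - b‖ := by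
    intro a b
    have := convex_univ.norm_image_sub_le_of_norm_hasFDerivWithin_le
      (f := fun x => L (F x)) (f' := fun x => L.comp (fderiv ℝ F x))
      (fun x _ => (L.hasFDerivAt.comp x
        (hF.differentiable one_ne_zero x).hasFDerivAt).hasFDerivWithinAt)
      (fun x _ => hderiv x) (Set.mem_univ b) (Set.mem_univ a)
    simpa using this
  have main : ∀ t : ℕ, ‖xs t - xo t‖ ≤ ε * (1 - lam ^ t) / (1 - lam) := by
    intro t
    induction t with
    | zero => simp [h0]
    | succ t ih =>
      have hstep : xs (t + 1) - xo (t + 1)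
          = L (Fs (xs t) - F (xs t)) + (L (F (xs t)) - L (F (xo t))) := by
        rw [hxs t, hxo t, map_sub]
        abel
      calc ‖xs (t + 1) - xo (t + 1)‖
          ≤ ‖L (Fs (xs t) - F (xs t))‖ + ‖L (F (xs t)) - L (F (xo t))‖ := by
            rw [hstep]; exact norm_add_le _ _
        _ ≤ ε + lam * ‖xs t - xo t‖ := add_le_add (hsur _) (key _ _)
        _ ≤ ε + lam * (ε * (1 - lam ^ t) / (1 - lam)) := by
            have := mul_le_mul_of_nonneg_left ih hl0.le
            linarith
        _ = ε * (1 - lam ^ (t + 1)) / (1 - lam) := by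
            field_simp
            ring
  refine ⟨main, fun t => (main t).trans ?_⟩
  have hpow : 0 ≤ lam ^ t := pow_nonneg hl0.le t
  rw [div_le_div_iff₀ hden hden]
  nlinarith [mul_nonneg (mul_nonneg hε hpow) hden.le]
end

section
/- Suppose that for every x ∈ ℝ^{d_x} the operator norm bound ‖(I − K H) ∘ DF(x)‖ ≤ λ holds for some constant λ > 0. Let the true signal satisfy x_t^true = F(x_{t−1}^true) and the observations y_t = H x_t^true + γ η_t for t ≥ 1, where η_t are random vectors in ℝ^{d_y} with E‖η_t‖ ≤ A for a constant A > 0, and let the operational 3DVar filter satisfy x_t^o = (I − K H) F(x_{t−1}^o) + K y_t. Then for every t ≥ 1, E‖x_t^o − x_t^true‖ ≤ λ E‖x_{t−1}^o − x_{t−1}^true‖ + γ ‖K‖ A. -/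
open MeasureTheory Filter

/-- One-step expected-error bound for the operational 3DVar filter:
`E‖x_t^o - x_t^true‖ ≤ lam * E‖x_{t-1}^o - x_{t-1}^true‖ + γ ‖K‖ A`. -/
theorem stmt_4 {dx dy : ℕ} (hdx : 0 < dx) (hdy : 0 < dy)
    {Ω : Type} [MeasurableSpace Ω] (μ : Measure Ω) [IsProbabilityMeasure μ]
    (F : Ex dx → Ex dx) (hF : ContDiff ℝ 1 F)
    (H : Ex dx →L[ℝ] Ex dy) (K : Ex dy →L[ℝ] Ex dx)
    (lam : ℝ) (hlam : 0 < lam)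
    (hderiv : ∀ x : Ex dx,
      ‖(ContinuousLinearMap.id ℝ (Ex dx) - K.comp H).comp (fderiv ℝ F x)‖ ≤ lam)
    (γ : ℝ) (hγ : 0 ≤ γ)
    (A : ℝ) (hA : 0 < A)
    (η : ℕ → Ω → Ex dy)
    (hη_int : ∀ t : ℕ, Integrable (fun ω => ‖η t ω‖) μ)
    (hη_mean : ∀ t : ℕ, ∫ ω, ‖η t ω‖ ∂μ ≤ A)
    (xtrue : ℕ → Ex dx) (y : ℕ → Ω → Ex dy) (xo : ℕ → Ω → Ex dx)
    (hxtrue : ∀ t : ℕ, xtrue (t + 1) = F (xtrue t))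
    (hy : ∀ (t : ℕ) (ω : Ω), y (t + 1) ω = H (xtrue (t + 1)) + γ • η (t + 1) ω)
    (hxo : ∀ (t : ℕ) (ω : Ω), xo (t + 1) ω =
      (ContinuousLinearMap.id ℝ (Ex dx) - K.comp H) (F (xo t ω)) + K (y (t + 1) ω))
    (herr_int : ∀ t : ℕ, Integrable (fun ω => ‖xo t ω - xtrue t‖) μ) :
    ∀ t : ℕ, ∫ ω, ‖xo (t + 1) ω - xtrue (t + 1)‖ ∂μ ≤
      lam * ∫ ω, ‖xo t ω - xtrue t‖ ∂μ + γ * ‖K‖ * A := by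
  intro t
  set L := ContinuousLinearMap.id ℝ (Ex dx) - K.comp H with hL
  set G : Ex dx → Ex dx := fun x => L (F x) with hGdef
  have hGderiv : ∀ x : Ex dx, HasFDerivAt G (L.comp (fderiv ℝ F x)) x := by
    intro x
    exact (L.hasFDerivAt).comp x ((hF.differentiable one_ne_zero x).hasFDerivAt)
  have hlip : ∀ a b : Ex dx, ‖G a - G b‖ ≤ lam * ‖a - b‖ := by
    intro a b
    exact Convex.norm_image_sub_le_of_norm_hasFDerivWithin_le
      (f' := fun x => L.comp (fderiv ℝ F x))
      (fun x _ => (hGderiv x).hasFDerivWithinAt)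
      (fun x _ => hderiv x) convex_univ (Set.mem_univ b) (Set.mem_univ a)
  have hpt : ∀ ω : Ω, ‖xo (t + 1) ω - xtrue (t + 1)‖ ≤
      lam * ‖xo t ω - xtrue t‖ + γ * ‖K‖ * ‖η (t + 1) ω‖ := by
    intro ω
    have hrew : xo (t + 1) ω - xtrue (t + 1) =
        (G (xo t ω) - G (xtrue t)) + γ • K (η (t + 1) ω) := by
      rw [hxo, hy, hxtrue]
      simp only [hGdef, hL, map_add, _root_.map_smul, ContinuousLinearMap.sub_apply,
        ContinuousLinearMap.coe_id', id_eq, ContinuousLinearMap.comp_apply]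
      abel
    rw [hrew]
    calc ‖(G (xo t ω) - G (xtrue t)) + γ • K (η (t + 1) ω)‖
        ≤ ‖G (xo t ω) - G (xtrue t)‖ + ‖γ • K (η (t + 1) ω)‖ := norm_add_le _ _
      _ ≤ lam * ‖xo t ω - xtrue t‖ + γ * ‖K‖ * ‖η (t + 1) ω‖ := by
          refine add_le_add (hlip _ _) ?_
          rw [norm_smul, Real.norm_eq_abs, abs_of_nonneg hγ, mul_assoc]
          exact mul_le_mul_of_nonneg_left (K.le_opNorm _) hγ
  have hint_rhs : Integrable
      (fun ω => lam * ‖xo t ω - xtrue t‖ + γ * ‖K‖ * ‖η (t + 1) ω‖) μ :=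
    ((herr_int t).const_mul lam).add ((hη_int (t + 1)).const_mul (γ * ‖K‖))
  calc ∫ ω, ‖xo (t + 1) ω - xtrue (t + 1)‖ ∂μ
      ≤ ∫ ω, (lam * ‖xo t ω - xtrue t‖ + γ * ‖K‖ * ‖η (t + 1) ω‖) ∂μ :=
        integral_mono (herr_int (t + 1)) hint_rhs hpt
    _ = lam * (∫ ω, ‖xo t ω - xtrue t‖ ∂μ) + γ * ‖K‖ * ∫ ω, ‖η (t + 1) ω‖ ∂μ := by
        rw [integral_add ((herr_int t).const_mul lam) ((hη_int (t + 1)).const_mul (γ * ‖K‖)),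
          integral_const_mul, integral_const_mul]
    _ ≤ lam * (∫ ω, ‖xo t ω - xtrue t‖ ∂μ) + γ * ‖K‖ * A := by
        refine add_le_add le_rfl ?_
        exact mul_le_mul_of_nonneg_left (hη_mean (t + 1)) (by positivity)
end

section
/- Suppose that for every x ∈ ℝ^{d_x} the operator norm bound ‖(I − K H) ∘ DF(x)‖ ≤ λ holds for some constant λ ∈ (0,1). Let the true signal satisfy x_t^true = F(x_{t−1}^true) for t ≥ 1, and suppose the observations are noise-free: y_t = H x_t^true. Let the operational 3DVar filter satisfy x_t^o = (I − K H) F(x_{t−1}^o) + K y_t for t ≥ 1. Then for every t ≥ 0, ‖x_t^o − x_t^true‖ ≤ λ^t ‖x_0^o − x_0^true‖; in particular x_t^o − x_t^true → 0 as t → ∞. -/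
open Filter Topology

/-- With noise-free observations `y_t = H x_t^true`, the operational 3DVar filter
synchronizes with the truth: `‖x_t^o - x_t^true‖ ≤ lam^t ‖x_0^o - x_0^true‖`,
and in particular `x_t^o - x_t^true → 0` as `t → ∞`. -/
theorem stmt_7 {dx dy : ℕ} (hdx : 0 < dx) (hdy : 0 < dy)
    (F : Ex dx → Ex dx) (hF : ContDiff ℝ 1 F)
    (H : Ex dx →L[ℝ] Ex dy) (K : Ex dy →L[ℝ] Ex dx)
    (lam : ℝ) (hlam : lam ∈ Set.Ioo (0 : ℝ) 1)
    (hderiv : ∀ x : Ex dx,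
      ‖(ContinuousLinearMap.id ℝ (Ex dx) - K.comp H).comp (fderiv ℝ F x)‖ ≤ lam)
    (xtrue : ℕ → Ex dx) (y : ℕ → Ex dy) (xo : ℕ → Ex dx)
    (hxtrue : ∀ t : ℕ, xtrue (t + 1) = F (xtrue t))
    (hy : ∀ t : ℕ, y t = H (xtrue t))
    (hxo : ∀ t : ℕ, xo (t + 1) =
      (ContinuousLinearMap.id ℝ (Ex dx) - K.comp H) (F (xo t)) + K (y (t + 1))) :
    (∀ t : ℕ, ‖xo t - xtrue t‖ ≤ lam ^ t * ‖xo 0 - xtrue 0‖) ∧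
      Tendsto (fun t => xo t - xtrue t) atTop (𝓝 0) := by
  obtain ⟨hlam0, hlam1⟩ := hlam
  set T := ContinuousLinearMap.id ℝ (Ex dx) - K.comp H with hT
  set G : Ex dx → Ex dx := fun x => T (F x) with hG
  have hGdiff : Differentiable ℝ G := T.differentiable.comp (hF.differentiable one_ne_zero)
  have hGderiv : ∀ x, fderiv ℝ G x = T.comp (fderiv ℝ F x) := fun x =>
    (T.hasFDerivAt.comp x ((hF.differentiable one_ne_zero x).hasFDerivAt)).fderiv
  have hGlip : ∀ a b : Ex dx, ‖G a - G b‖ ≤ lam * ‖a - b‖ := by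
    intro a b
    exact Convex.norm_image_sub_le_of_norm_fderiv_le (fun x _ => hGdiff x)
      (fun x _ => by rw [hGderiv]; exact hderiv x) convex_univ
      (Set.mem_univ b) (Set.mem_univ a)
  have key : ∀ t, xo (t + 1) - xtrue (t + 1) = G (xo t) - G (xtrue t) := by
    intro t
    have h1 : xo (t + 1) = G (xo t) + K (H (xtrue (t + 1))) := by
      rw [hxo t, hy (t + 1)]
    have h2 : xtrue (t + 1) = G (xtrue t) + K (H (xtrue (t + 1))) := by
      have hGt : G (xtrue t) = xtrue (t + 1) - K (H (xtrue (t + 1))) := by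
        simp only [hG, ← hxtrue t, hT, ContinuousLinearMap.sub_apply,
          ContinuousLinearMap.coe_id', id_eq, ContinuousLinearMap.coe_comp',
          Function.comp_apply]
      rw [hGt]; abel
    have h3 : xo (t + 1) - xtrue (t + 1) =
        (G (xo t) + K (H (xtrue (t + 1)))) - (G (xtrue t) + K (H (xtrue (t + 1)))) := by
      rw [← h1, ← h2]
    rw [h3]; abel
  have hbound : ∀ t : ℕ, ‖xo t - xtrue t‖ ≤ lam ^ t * ‖xo 0 - xtrue 0‖ := by
    intro t
    induction t with
    | zero => simp
    | succ n ih =>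
      rw [key n]
      calc ‖G (xo n) - G (xtrue n)‖ ≤ lam * ‖xo n - xtrue n‖ := hGlip _ _
        _ ≤ lam * (lam ^ n * ‖xo 0 - xtrue 0‖) := by
            exact mul_le_mul_of_nonneg_left ih hlam0.le
        _ = lam ^ (n + 1) * ‖xo 0 - xtrue 0‖ := by ring
  refine ⟨hbound, ?_⟩
  rw [tendsto_zero_iff_norm_tendsto_zero]
  have h0 : Tendsto (fun t : ℕ => lam ^ t * ‖xo 0 - xtrue 0‖) atTop (𝓝 0) := by
    simpa using (tendsto_pow_atTop_nhds_zero_of_lt_one hlam0.le hlam1).mul_const ‖xo 0 - xtrue 0‖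
  exact squeeze_zero (fun t => norm_nonneg _) hbound h0
end

section
/- Suppose that for every x ∈ ℝ^{d_x} the operator norm bound ‖(I − K H) ∘ DF(x)‖ ≤ λ holds for some constant λ ∈ (0,1), and that ‖(I − K H)(F_s(x) − F(x))‖ ≤ ε for every x ∈ ℝ^{d_x}. Let the true signal satisfy x_t^true = F(x_{t−1}^true) for t ≥ 1, suppose the observations are noise-free, y_t = H x_t^true, and let the surrogate 3DVar filter satisfy x_t^s = (I − K H) F_s(x_{t−1}^s) + K y_t for t ≥ 1. Then limsup_{t→∞} ‖x_t^s − x_t^true‖ ≤ ε/(1 − λ). -/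
open Filter

/-- With noise-free observations `y_t = H x_t^true`, the surrogate 3DVar filter
satisfies the long-time accuracy bound `limsup_{t→∞} ‖x_t^s - x_t^true‖ ≤ ε/(1 - lam)`. -/
theorem stmt_8 {dx dy : ℕ} (hdx : 0 < dx) (hdy : 0 < dy)
    (F Fs : Ex dx → Ex dx) (hF : ContDiff ℝ 1 F)
    (H : Ex dx →L[ℝ] Ex dy) (K : Ex dy →L[ℝ] Ex dx)
    (lam : ℝ) (hlam : lam ∈ Set.Ioo (0 : ℝ) 1)
    (hderiv : ∀ x : Ex dx,
      ‖(ContinuousLinearMap.id ℝ (Ex dx) - K.comp H).comp (fderiv ℝ F x)‖ ≤ lam)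
    (ε : ℝ)
    (hsur : ∀ x : Ex dx,
      ‖(ContinuousLinearMap.id ℝ (Ex dx) - K.comp H) (Fs x - F x)‖ ≤ ε)
    (xtrue : ℕ → Ex dx) (y : ℕ → Ex dy) (xs : ℕ → Ex dx)
    (hxtrue : ∀ t : ℕ, xtrue (t + 1) = F (xtrue t))
    (hy : ∀ t : ℕ, y t = H (xtrue t))
    (hxs : ∀ t : ℕ, xs (t + 1) =
      (ContinuousLinearMap.id ℝ (Ex dx) - K.comp H) (Fs (xs t)) + K (y (t + 1))) :
    limsup (fun t => ‖xs t - xtrue t‖) atTop ≤ ε / (1 - lam) := by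
  obtain ⟨hlam0, hlam1⟩ := hlam
  have h1lam : (0:ℝ) < 1 - lam := by linarith
  set L : Ex dx →L[ℝ] Ex dx := ContinuousLinearMap.id ℝ (Ex dx) - K.comp H with hL
  have hFd : Differentiable ℝ F := hF.differentiable one_ne_zero
  have hε0 : 0 ≤ ε := le_trans (norm_nonneg _) (hsur 0)
  -- Lipschitz bound for L ∘ F
  have hLF : ∀ a b : Ex dx, ‖L (F a) - L (F b)‖ ≤ lam * ‖a - b‖ := by
    intro a b
    have hdiff : ∀ x ∈ (Set.univ : Set (Ex dx)), DifferentiableAt ℝ (fun z => L (F z)) x :=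
      fun x _ => L.differentiableAt.comp x (hFd x)
    have hbound : ∀ x ∈ (Set.univ : Set (Ex dx)), ‖fderiv ℝ (fun z => L (F z)) x‖ ≤ lam := by
      intro x _
      have : fderiv ℝ (fun z => L (F z)) x = L.comp (fderiv ℝ F x) :=
        (L.hasFDerivAt.comp x (hFd x).hasFDerivAt).fderiv
      rw [this]; exact hderiv x
    exact convex_univ.norm_image_sub_le_of_norm_fderiv_le hdiff hbound
      (Set.mem_univ b) (Set.mem_univ a)
  -- one-step error contraction
  have hstep : ∀ t : ℕ, ‖xs (t+1) - xtrue (t+1)‖ ≤ lam * ‖xs t - xtrue t‖ + ε := by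
    intro t
    have he : xs (t+1) - xtrue (t+1)
        = (L (Fs (xs t)) - L (F (xs t))) + (L (F (xs t)) - L (F (xtrue t))) := by
      rw [hxs t, hy (t+1), hxtrue t]
      simp only [hL, ContinuousLinearMap.sub_apply, ContinuousLinearMap.id_apply,
        ContinuousLinearMap.comp_apply, map_sub]
      abel
    calc ‖xs (t+1) - xtrue (t+1)‖
        ≤ ‖L (Fs (xs t)) - L (F (xs t))‖ + ‖L (F (xs t)) - L (F (xtrue t))‖ := by
          rw [he]; exact norm_add_le _ _
      _ ≤ ε + lam * ‖xs t - xtrue t‖ := by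
          refine add_le_add ?_ (hLF _ _)
          have := hsur (xs t)
          rwa [map_sub] at this
      _ = lam * ‖xs t - xtrue t‖ + ε := by ring
  -- iterated bound
  have hbound : ∀ t : ℕ, ‖xs t - xtrue t‖ ≤ lam ^ t * ‖xs 0 - xtrue 0‖ + ε / (1 - lam) := by
    intro t
    induction t with
    | zero => simp [hε0, h1lam, div_nonneg hε0 h1lam.le]
    | succ t ih =>
      calc ‖xs (t+1) - xtrue (t+1)‖ ≤ lam * ‖xs t - xtrue t‖ + ε := hstep t
        _ ≤ lam * (lam ^ t * ‖xs 0 - xtrue 0‖ + ε / (1 - lam)) + ε := by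
            have := mul_le_mul_of_nonneg_left ih hlam0.le
            linarith
        _ = lam ^ (t+1) * ‖xs 0 - xtrue 0‖ + (lam * (ε / (1 - lam)) + ε) := by ring
        _ = lam ^ (t+1) * ‖xs 0 - xtrue 0‖ + ε / (1 - lam) := by
            field_simp; ring
  -- pass to limsup
  have htend : Tendsto (fun t : ℕ => lam ^ t * ‖xs 0 - xtrue 0‖ + ε / (1 - lam)) atTop
      (nhds (ε / (1 - lam))) := by
    have h0 : Tendsto (fun t : ℕ => lam ^ t) atTop (nhds 0) :=
      tendsto_pow_atTop_nhds_zero_of_lt_one hlam0.le hlam1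
    have := (h0.mul_const ‖xs 0 - xtrue 0‖).add_const (ε / (1 - lam))
    simpa using this
  calc limsup (fun t => ‖xs t - xtrue t‖) atTop
      ≤ limsup (fun t : ℕ => lam ^ t * ‖xs 0 - xtrue 0‖ + ε / (1 - lam)) atTop := by
        refine limsup_le_limsup (Eventually.of_forall hbound)
          (hu := ?_) (hv := htend.isBoundedUnder_le)
        exact (isBoundedUnder_of ⟨0, fun t => norm_nonneg _⟩ :
          IsBoundedUnder (· ≥ ·) atTop _).isCoboundedUnder_le
    _ = ε / (1 - lam) := htend.limsup_eq
end

section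
/- Suppose ‖(I − K H)(F_s(x) − F(x))‖ ≤ ε and ‖(I − K H)(F(x) − F(y))‖ ≤ λ ‖x − y‖ for all x, y ∈ ℝ^{d_x}, with λ ∈ (0,1). Fix any sequence of observation vectors y_t ∈ ℝ^{d_y}, and define x_t^s = (I − K H) F_s(x_{t−1}^s) + K y_t and x_t^o = (I − K H) F(x_{t−1}^o) + K y_t for t ≥ 1. Then for every t ≥ 1, x_t^s − x_t^o = (I − K H)(F_s(x_{t−1}^s) − F(x_{t−1}^s)) + (I − K H)(F(x_{t−1}^s) − F(x_{t−1}^o)), and consequently limsup_{t→∞} ‖x_t^s − x_t^o‖ ≤ ε/(1 − λ). -/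
open Filter

/-- Error decomposition identity between the surrogate and operational 3DVar filters,
`x_t^s - x_t^o = (I - K H)(F_s(x_{t-1}^s) - F(x_{t-1}^s)) + (I - K H)(F(x_{t-1}^s) - F(x_{t-1}^o))`,
and the resulting long-time bound `limsup_{t→∞} ‖x_t^s - x_t^o‖ ≤ ε/(1 - lam)`. -/
theorem stmt_10 {dx dy : ℕ} (hdx : 0 < dx) (hdy : 0 < dy)
    (F Fs : Ex dx → Ex dx)
    (H : Ex dx →L[ℝ] Ex dy) (K : Ex dy →L[ℝ] Ex dx)
    (lam ε : ℝ) (hlam : lam ∈ Set.Ioo (0 : ℝ) 1)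
    (hsur : ∀ x : Ex dx,
      ‖(ContinuousLinearMap.id ℝ (Ex dx) - K.comp H) (Fs x - F x)‖ ≤ ε)
    (hlip : ∀ x y : Ex dx,
      ‖(ContinuousLinearMap.id ℝ (Ex dx) - K.comp H) (F x - F y)‖ ≤ lam * ‖x - y‖)
    (y : ℕ → Ex dy) (xs xo : ℕ → Ex dx)
    (hxs : ∀ t : ℕ, xs (t + 1) =
      (ContinuousLinearMap.id ℝ (Ex dx) - K.comp H) (Fs (xs t)) + K (y (t + 1)))
    (hxo : ∀ t : ℕ, xo (t + 1) =
      (ContinuousLinearMap.id ℝ (Ex dx) - K.comp H) (F (xo t)) + K (y (t + 1))) :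
    (∀ t : ℕ, xs (t + 1) - xo (t + 1) =
        (ContinuousLinearMap.id ℝ (Ex dx) - K.comp H) (Fs (xs t) - F (xs t))
          + (ContinuousLinearMap.id ℝ (Ex dx) - K.comp H) (F (xs t) - F (xo t))) ∧
      limsup (fun t => ‖xs t - xo t‖) atTop ≤ ε / (1 - lam) := by

  obtain ⟨hl0, hl1⟩ := hlam
  have heps : (0:ℝ) ≤ ε := le_trans (norm_nonneg _) (hsur 0)
  have hid : ∀ t : ℕ, xs (t + 1) - xo (t + 1) =
      (ContinuousLinearMap.id ℝ (Ex dx) - K.comp H) (Fs (xs t) - F (xs t))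
        + (ContinuousLinearMap.id ℝ (Ex dx) - K.comp H) (F (xs t) - F (xo t)) := by
    intro t
    rw [hxs t, hxo t, map_sub, map_sub]
    abel
  refine ⟨hid, ?_⟩
  set e : ℕ → ℝ := fun t => ‖xs t - xo t‖ with he
  have hrec : ∀ t : ℕ, e (t + 1) ≤ lam * e t + ε := by
    intro t
    calc e (t + 1) = ‖(ContinuousLinearMap.id ℝ (Ex dx) - K.comp H) (Fs (xs t) - F (xs t))
          + (ContinuousLinearMap.id ℝ (Ex dx) - K.comp H) (F (xs t) - F (xo t))‖ := by
            rw [he]; simp only [hid t]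
      _ ≤ ‖(ContinuousLinearMap.id ℝ (Ex dx) - K.comp H) (Fs (xs t) - F (xs t))‖
          + ‖(ContinuousLinearMap.id ℝ (Ex dx) - K.comp H) (F (xs t) - F (xo t))‖ :=
            norm_add_le _ _
      _ ≤ ε + lam * e t := add_le_add (hsur _) (hlip _ _)
      _ = lam * e t + ε := by ring
  have h1l : (0:ℝ) < 1 - lam := by linarith
  have hbound : ∀ t : ℕ, e t ≤ lam ^ t * e 0 + ε / (1 - lam) := by
    intro t
    induction t with
    | zero => simp [div_nonneg heps h1l.le]
    | succ n ih =>
      have := hrec n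
      have h2 : lam * e n ≤ lam * (lam ^ n * e 0 + ε / (1 - lam)) :=
        mul_le_mul_of_nonneg_left ih hl0.le
      have key : lam * (ε / (1 - lam)) + ε = ε / (1 - lam) := by
        field_simp
        ring
      calc e (n + 1) ≤ lam * e n + ε := hrec n
        _ ≤ lam * (lam ^ n * e 0 + ε / (1 - lam)) + ε := by linarith
        _ = lam ^ (n + 1) * e 0 + (lam * (ε / (1 - lam)) + ε) := by ring
        _ = lam ^ (n + 1) * e 0 + ε / (1 - lam) := by rw [key]
  have htend : Filter.Tendsto (fun t : ℕ => lam ^ t * e 0 + ε / (1 - lam)) atTop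
      (nhds (ε / (1 - lam))) := by
    have : Filter.Tendsto (fun t : ℕ => lam ^ t * e 0) atTop (nhds 0) := by
      simpa using (tendsto_pow_atTop_nhds_zero_of_lt_one hl0.le hl1).mul_const (e 0)
    simpa using this.add_const (ε / (1 - lam))
  have h1 : limsup (fun t : ℕ => lam ^ t * e 0 + ε / (1 - lam)) atTop = ε / (1 - lam) :=
    htend.limsup_eq
  calc limsup e atTop ≤ limsup (fun t : ℕ => lam ^ t * e 0 + ε / (1 - lam)) atTop := by
        have hcob : Filter.IsCoboundedUnder (· ≤ ·) atTop e :=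
          (Filter.isBoundedUnder_of ⟨0, fun t => norm_nonneg _⟩ :
            Filter.IsBoundedUnder (· ≥ ·) atTop e).isCoboundedUnder_le
        exact Filter.limsup_le_limsup (Filter.Eventually.of_forall hbound) hcob
          htend.isBoundedUnder_le
    _ = ε / (1 - lam) := h1
end
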